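/- If every pair of parallel 3-cells in a confluent 3-precategory becomes equal after post-composition with a common 3-cell, then the localization is coherent. Abstract groupoid version: let C be a category (thought of as the category of 2-cells and rewriting paths) such that (confluence) any cospan f : a → b, g : a → c admits f' : b → d, g' : c → d with f ≫ f' = g ≫ g', and (weak coherence) for any parallel f, g : a → b there exists h : b → c with f ≫ h = g ≫ h. Then in the groupoidification (localization at all morphisms) of C, any two parallel morphisms are equal. -/
import Mathlib


open CategoryTheory

/-- If a category is confluent (every cospan completes to a commuting square)
and weakly coherent (parallel morphisms are equalized by post-composition),
then its localization at all morphisms is coherent: any two parallel morphisms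
of the localization are equal. -/
theorem stmt_17 {C : Type*} [Category C]
    (hconf : ∀ {a b c : C} (f : a ⟶ b) (g : a ⟶ c),
      ∃ (d : C) (f' : b ⟶ d) (g' : c ⟶ d), f ≫ f' = g ≫ g')
    (hweak : ∀ {a b : C} (f g : a ⟶ b),
      ∃ (c : C) (h : b ⟶ c), f ≫ h = g ≫ h) :
    ∀ (x y : (⊤ : MorphismProperty C).Localization) (f g : x ⟶ y), f = g := by
  haveI : (⊤ : MorphismProperty C).HasLeftCalculusOfFractions := by
    constructor
    · intro X Y φ
      obtain ⟨d, f', g', h⟩ := hconf φ.f φ.s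
      exact ⟨MorphismProperty.LeftFraction.mk g' f' trivial, h⟩
    · intro X' X Y f₁ f₂ s _ _
      obtain ⟨c, h, hh⟩ := hweak f₁ f₂
      exact ⟨c, h, trivial, hh⟩
  intro x y f g
  obtain ⟨x', rfl⟩ : ∃ x', (⊤ : MorphismProperty C).Q.obj x' = x :=
    ⟨_, (Localization.Construction.objEquiv _).right_inv x⟩
  obtain ⟨y', rfl⟩ : ∃ y', (⊤ : MorphismProperty C).Q.obj y' = y :=
    ⟨_, (Localization.Construction.objEquiv _).right_inv y⟩
  obtain ⟨φ, rfl⟩ := Localization.exists_leftFraction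
    (⊤ : MorphismProperty C).Q ⊤ f
  obtain ⟨ψ, rfl⟩ := Localization.exists_leftFraction
    (⊤ : MorphismProperty C).Q ⊤ g
  rw [MorphismProperty.LeftFraction.map_eq_iff]
  obtain ⟨d, u, v, huv⟩ := hconf φ.s ψ.s
  obtain ⟨e, h, hh⟩ := hweak (φ.f ≫ u) (ψ.f ≫ v)
  exact ⟨e, u ≫ h, v ≫ h, by rw [← Category.assoc, ← Category.assoc, huv],
    by simpa using hh, trivial⟩
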